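/- For the (s+1)×(s+1) matrix Θ_s defined by θ_{l,k} = 1 if l = 0; 2^{l-1} if 0 < l ≤ s - k; -2^{l-1} if l + k = s + 1; and 0 if l + k > s + 1, the determinant of Θ_s equals (-1)^{⌈s/2⌉} · 2^{s(s+1)/2}; explicitly, det(Θ_s) = (-1)^{(s+1)/2} 2^{s(s+1)/2} when s is odd and (-1)^{s/2} 2^{s(s+1)/2} when s is even. -/

import Mathlib

/-- The matrix `Θ_s` from the MacWilliams identity for shape enumerators of binary NRT-codes. -/
def Theta (s : ℕ) : Matrix (Fin (s+1)) (Fin (s+1)) ℤ :=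
  Matrix.of fun l k =>
    if (l : ℕ) = 0 then 1
    else if (l : ℕ) + (k : ℕ) ≤ s then 2 ^ ((l : ℕ) - 1)
    else if (l : ℕ) + (k : ℕ) = s + 1 then -(2 ^ ((l : ℕ) - 1))
    else 0

private def Mmat (s : ℕ) : Matrix (Fin (s+1)) (Fin (s+1)) ℤ :=
  Matrix.of fun l k =>
    if (l : ℕ) + (k : ℕ) ≤ s then 1
    else if (l : ℕ) + (k : ℕ) = s + 1 then -1 else 0

private lemma tri_succ (s : ℕ) : (s+1) * ((s+1)+1) / 2 = s * (s+1) / 2 + (s+1) := by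
  obtain ⟨t, ht⟩ := Nat.even_mul_succ_self s
  have h2 : (s+1) * ((s+1)+1) = s * (s+1) + 2*(s+1) := by ring
  omega

private lemma Mdet (s : ℕ) : (Mmat s).det = (-1) ^ (s * (s+1) / 2) * 2 ^ s := by
  induction s with
  | zero => simp [Mmat, Matrix.det_fin_one]
  | succ s ih =>
    have h0 : (Mmat (s+1)).submatrix (Fin.succAbove 0) (Fin.last (s+1)).succAbove = Mmat s := by
      ext l k
      have hl := l.is_lt; have hk := k.is_lt
      simp only [Matrix.submatrix_apply, Fin.succAbove_zero, Fin.succAbove_last, Mmat,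
        Matrix.of_apply, Fin.val_succ, Fin.coe_castSucc]
      split_ifs <;> omega
    have h1 : (Mmat (s+1)).submatrix (Fin.succAbove (Fin.succ 0)) (Fin.last (s+1)).succAbove
        = Mmat s := by
      ext l k
      have hl := l.is_lt; have hk := k.is_lt
      have hval : (((Fin.succ 0 : Fin (s+2)).succAbove l : Fin (s+2)) : ℕ)
          = if (l:ℕ) = 0 then 0 else (l:ℕ)+1 := by
        rcases eq_or_ne (l:ℕ) 0 with h | h
        · rw [if_pos h, Fin.succAbove_of_castSucc_lt]
          · simpa using h
          · simp only [Fin.lt_iff_val_lt_val, Fin.coe_castSucc, Fin.val_succ, Fin.val_zero]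
            omega
        · rw [if_neg h, Fin.succAbove_of_lt_succ]
          · simp
          · simp only [Fin.lt_iff_val_lt_val, Fin.val_succ, Fin.val_zero]
            omega
      simp only [Matrix.submatrix_apply, Fin.succAbove_last, Mmat, Matrix.of_apply,
        Fin.coe_castSucc, hval]
      split_ifs <;> omega
    rw [Matrix.det_succ_column (Mmat (s+1)) (Fin.last (s+1))]
    rw [Fin.sum_univ_succ, Fin.sum_univ_succ]
    have hz : ∀ i : Fin s, Mmat (s+1) i.succ.succ (Fin.last (s+1)) = 0 := by
      intro i
      simp only [Mmat, Matrix.of_apply, Fin.val_succ, Fin.val_last]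
      rw [if_neg (by omega), if_neg (by omega)]
    have hsum : (∑ i : Fin s, (-1:ℤ) ^ ((i.succ.succ : ℕ) + (Fin.last (s+1) : ℕ)) *
        Mmat (s+1) i.succ.succ (Fin.last (s+1)) *
        ((Mmat (s+1)).submatrix (Fin.succAbove i.succ.succ) (Fin.last (s+1)).succAbove).det)
        = 0 := by
      apply Finset.sum_eq_zero
      intro i _
      rw [hz i]; ring
    rw [hsum, h0, h1, ih]
    have e0 : Mmat (s+1) 0 (Fin.last (s+1)) = 1 := by
      simp [Mmat]
    have e1 : Mmat (s+1) (Fin.succ 0) (Fin.last (s+1)) = -1 := by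
      simp only [Mmat, Matrix.of_apply, Fin.val_last, Fin.val_succ, Fin.val_zero]
      split_ifs <;> omega
    rw [e0, e1, tri_succ s]
    simp only [Fin.val_zero, Fin.val_last, Fin.val_succ, zero_add]
    ring

private lemma neg_one_pow_congr_mod2 {a b : ℕ} (h : a % 2 = b % 2) : ((-1:ℤ))^a = (-1)^b := by
  rcases Nat.even_or_odd a with ha | ha
  · have hb : Even b := Nat.even_iff.mpr (by rw [← h]; exact Nat.even_iff.mp ha)
    rw [Even.neg_one_pow ha, Even.neg_one_pow hb]
  · have hb : Odd b := Nat.odd_iff.mpr (by rw [← h]; exact Nat.odd_iff.mp ha)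
    rw [Odd.neg_one_pow ha, Odd.neg_one_pow hb]

private lemma parity_aux (s : ℕ) : (s*(s+1)/2) % 2 = ((s+1)/2) % 2 := by
  rcases Nat.even_or_odd s with ⟨m, hm⟩ | ⟨m, hm⟩
  · have h2 : s*(s+1) = 2*(m*(s+1)) := by rw [hm]; ring
    have h3 : m*(s+1) = m*s + m := by ring
    have h4 : m*s = 2*(m*m) := by rw [hm]; ring
    omega
  · have h2 : s*(s+1) = 2*(s*(m+1)) := by rw [hm]; ring
    have h3 : s*(m+1) = 2*(m*(m+1)) + (m+1) := by rw [hm]; ring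
    omega

private lemma sum_pred (s : ℕ) : (∑ l : Fin (s+1), ((l:ℕ)-1)) + s = s*(s+1)/2 := by
  induction s with
  | zero => simp
  | succ s ih =>
    rw [Fin.sum_univ_castSucc]
    simp only [Fin.coe_castSucc, Fin.val_last]
    have := tri_succ s
    omega

private lemma theta_eq (s : ℕ) :
    Theta s = Matrix.diagonal (fun l : Fin (s+1) => (2:ℤ)^((l:ℕ)-1)) * Mmat s := by
  ext l k
  rw [Matrix.diagonal_mul]
  have hk := k.is_lt
  simp only [Theta, Mmat, Matrix.of_apply]
  rcases eq_or_ne (l:ℕ) 0 with h | h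
  · rw [if_pos h, h, if_pos (by omega)]
    norm_num
  · rw [if_neg h]
    split_ifs <;> ring

private lemma theta_det_aux (s : ℕ) :
    (Theta s).det = (-1) ^ ((s + 1) / 2) * 2 ^ (s * (s + 1) / 2) := by
  rw [theta_eq, Matrix.det_mul, Matrix.det_diagonal, Mdet, Finset.prod_pow_eq_pow_sum]
  have hE := sum_pred s
  calc (2:ℤ) ^ (∑ l : Fin (s+1), ((l:ℕ)-1)) * ((-1) ^ (s*(s+1)/2) * 2 ^ s)
      = (-1) ^ (s*(s+1)/2) * 2 ^ ((∑ l : Fin (s+1), ((l:ℕ)-1)) + s) := by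
        rw [pow_add]; ring
    _ = (-1) ^ ((s + 1) / 2) * 2 ^ (s * (s + 1) / 2) := by
        rw [hE, neg_one_pow_congr_mod2 (parity_aux s)]

theorem theta_det (s : ℕ) :
    (Theta s).det = (-1) ^ ((s + 1) / 2) * 2 ^ (s * (s + 1) / 2) ∧
    (Odd s → (Theta s).det = (-1) ^ ((s + 1) / 2) * 2 ^ (s * (s + 1) / 2)) ∧
    (Even s → (Theta s).det = (-1) ^ (s / 2) * 2 ^ (s * (s + 1) / 2)) := by
  refine ⟨theta_det_aux s, fun _ => theta_det_aux s, fun he => ?_⟩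
  obtain ⟨m, hm⟩ := he
  have h : (s + 1) / 2 = s / 2 := by omega
  rw [theta_det_aux s, h]
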